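/- Let x₀ ∈ X and let (x_t)_{t≥0}, (u_t)_{t≥0} be sequences with x_0 = x₀, x_{t+1} = f(x_t, u_t), x_t ∈ X and u_t ∈ U for all t ≥ 0. Then the discounted occupation measure μ := Σ_{t=0}^∞ αᵗ δ_{(x_t, u_t)} is a finite nonnegative Borel measure supported in X × U with total mass μ(X × U) = 1/(1−α), and the pair (δ_{x₀}, μ) satisfies the discounted Liouville equation. -/

import Mathlib

open MeasureTheory
open scoped ENNReal

/-- The (topological) support of a Borel measure. -/
def msupport {α : Type*} [TopologicalSpace α] [MeasurableSpace α] (μ : Measure α) : Set α :=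
  {x | ∀ s : Set α, IsOpen s → x ∈ s → 0 < μ s}

/-- The discrete-time discounted Liouville equation for the pair `(μ₀, μ)`. -/
def LiouvilleD {n m : ℕ}
    (f : EuclideanSpace ℝ (Fin n) → EuclideanSpace ℝ (Fin m) → EuclideanSpace ℝ (Fin n))
    (α : ℝ) (μ₀ : Measure (EuclideanSpace ℝ (Fin n)))
    (μ : Measure (EuclideanSpace ℝ (Fin n) × EuclideanSpace ℝ (Fin m))) : Prop :=
  ∀ v : EuclideanSpace ℝ (Fin n) → ℝ, Continuous v →
    ∫ p, v p.1 ∂μ = ∫ x, v x ∂μ₀ + α * ∫ p, v (f p.1 p.2) ∂μ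

/-- The discounted occupation measure `μ = Σ_{t=0}^∞ αᵗ δ_{(x_t, u_t)}` of a state-control
trajectory. -/
noncomputable def discOccMeasure {n m : ℕ} (α : ℝ) (x : ℕ → EuclideanSpace ℝ (Fin n))
    (u : ℕ → EuclideanSpace ℝ (Fin m)) :
    Measure (EuclideanSpace ℝ (Fin n) × EuclideanSpace ℝ (Fin m)) :=
  Measure.sum fun t : ℕ => (ENNReal.ofReal (α ^ t)) • Measure.dirac (x t, u t)

lemma geom_tsum {α : ℝ} (hα0 : 0 ≤ α) (hα1 : α < 1) :
    ∑' t : ℕ, ENNReal.ofReal (α ^ t) = ENNReal.ofReal (1 / (1 - α)) := by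
  rw [← ENNReal.ofReal_tsum_of_nonneg (fun t => pow_nonneg hα0 t)
    (summable_geometric_of_lt_one hα0 hα1)]
  rw [tsum_geometric_of_lt_one hα0 hα1, one_div]

lemma discOcc_apply {n m : ℕ} (α : ℝ) (x : ℕ → EuclideanSpace ℝ (Fin n))
    (u : ℕ → EuclideanSpace ℝ (Fin m)) {s : Set _} (hs : MeasurableSet s) :
    discOccMeasure α x u s =
      ∑' t : ℕ, ENNReal.ofReal (α ^ t) * s.indicator 1 (x t, u t) := by
  rw [discOccMeasure, Measure.sum_apply _ hs]
  simp [Measure.dirac_apply' _ hs]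

lemma integral_discOcc {n m : ℕ} {α : ℝ} (hα0 : 0 ≤ α) (hα1 : α < 1)
    (x : ℕ → EuclideanSpace ℝ (Fin n)) (u : ℕ → EuclideanSpace ℝ (Fin m))
    (g : EuclideanSpace ℝ (Fin n) × EuclideanSpace ℝ (Fin m) → ℝ) (hg : Continuous g)
    (C : ℝ) (hC : ∀ t, ‖g (x t, u t)‖ ≤ C) :
    ∫ p, g p ∂(discOccMeasure α x u) = ∑' t, α ^ t * g (x t, u t) := by
  have hint : Integrable g (discOccMeasure α x u) := by
    refine ⟨hg.aestronglyMeasurable, ?_⟩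
    rw [HasFiniteIntegral, discOccMeasure, lintegral_sum_measure]
    simp only [lintegral_smul_measure, lintegral_dirac]
    calc ∑' t : ℕ, ENNReal.ofReal (α ^ t) * ‖g (x t, u t)‖₊
        ≤ ∑' t : ℕ, ENNReal.ofReal (α ^ t) * ENNReal.ofReal C := by
          refine ENNReal.tsum_le_tsum fun t => mul_le_mul_right ?_ _
          rw [← ENNReal.ofReal_coe_nnreal, coe_nnnorm]
          exact ENNReal.ofReal_le_ofReal (hC t)
      _ = ENNReal.ofReal (1 / (1 - α)) * ENNReal.ofReal C := by
          rw [ENNReal.tsum_mul_right, geom_tsum hα0 hα1]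
      _ < ⊤ := ENNReal.mul_lt_top ENNReal.ofReal_lt_top ENNReal.ofReal_lt_top
  rw [discOccMeasure] at hint ⊢
  rw [integral_sum_measure hint]
  congr 1
  funext t
  rw [integral_smul_measure, integral_dirac, ENNReal.toReal_ofReal (pow_nonneg hα0 t)]
  simp

theorem discounted_occupation_measure_satisfies_Liouville {n m : ℕ}
    (X : Set (EuclideanSpace ℝ (Fin n))) (U : Set (EuclideanSpace ℝ (Fin m)))
    (hX : IsCompact X) (hU : IsCompact U)
    (f : EuclideanSpace ℝ (Fin n) → EuclideanSpace ℝ (Fin m) → EuclideanSpace ℝ (Fin n))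
    (hf : Continuous fun p : EuclideanSpace ℝ (Fin n) × EuclideanSpace ℝ (Fin m) => f p.1 p.2)
    (α : ℝ) (hα0 : 0 < α) (hα1 : α < 1)
    (x0 : EuclideanSpace ℝ (Fin n)) (hx0 : x0 ∈ X)
    (x : ℕ → EuclideanSpace ℝ (Fin n)) (u : ℕ → EuclideanSpace ℝ (Fin m))
    (hinit : x 0 = x0) (hdyn : ∀ t, x (t + 1) = f (x t) (u t))
    (hxX : ∀ t, x t ∈ X) (huU : ∀ t, u t ∈ U) :
    IsFiniteMeasure (discOccMeasure α x u) ∧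
    msupport (discOccMeasure α x u) ⊆ X ×ˢ U ∧
    discOccMeasure α x u (X ×ˢ U) = ENNReal.ofReal (1 / (1 - α)) ∧
    LiouvilleD f α (Measure.dirac x0) (discOccMeasure α x u) := by
  have hXUmem : ∀ t, (x t, u t) ∈ X ×ˢ U := fun t => ⟨hxX t, huU t⟩
  have hXUc : IsClosed (X ×ˢ U) := (hX.prod hU).isClosed
  refine ⟨?_, ?_, ?_, ?_⟩
  · constructor
    rw [discOcc_apply α x u MeasurableSet.univ]
    simp only [Set.indicator_univ, Pi.one_apply, mul_one]
    rw [geom_tsum hα0.le hα1]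
    exact ENNReal.ofReal_lt_top
  · intro p hp
    by_contra hpc
    have h0 : discOccMeasure α x u (X ×ˢ U)ᶜ = 0 := by
      rw [discOcc_apply α x u hXUc.measurableSet.compl]
      refine ENNReal.tsum_eq_zero.mpr fun t => ?_
      rw [Set.indicator_of_notMem (by simp [hXUmem t]), mul_zero]
    have := hp (X ×ˢ U)ᶜ hXUc.isOpen_compl hpc
    rw [h0] at this
    exact lt_irrefl 0 this
  · rw [discOcc_apply α x u hXUc.measurableSet]
    simp only [Set.indicator_of_mem (hXUmem _), Pi.one_apply, mul_one]
    exact geom_tsum hα0.le hα1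
  · intro v hv
    obtain ⟨C, hC⟩ := hX.exists_bound_of_continuousOn hv.continuousOn
    rw [integral_discOcc hα0.le hα1 x u (fun p => v p.1) (hv.comp continuous_fst) C
      (fun t => hC _ (hxX t)),
      integral_discOcc hα0.le hα1 x u (fun p => v (f p.1 p.2)) (hv.comp hf) C
      (fun t => by show ‖v (f (x t) (u t))‖ ≤ C; rw [← hdyn t]; exact hC _ (hxX (t + 1))),
      integral_dirac, ← hinit]
    have hsum : Summable fun t => α ^ t * v (x t) := by
      refine Summable.of_norm (Summable.of_nonneg_of_le (fun t => norm_nonneg _)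
        (fun t => ?_) ((summable_geometric_of_lt_one hα0.le hα1).mul_left C))
      rw [norm_mul, norm_pow, Real.norm_of_nonneg hα0.le, mul_comm]
      exact mul_le_mul_of_nonneg_right (hC _ (hxX t)) (pow_nonneg hα0.le t)
    rw [hsum.tsum_eq_zero_add]
    simp only [pow_zero, one_mul, ← hdyn]
    rw [← tsum_mul_left]
    congr 1
    exact tsum_congr fun t => by ring
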